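/- Let g : ℕ → ℝ be nonnegative and superlinear, i.e., g(n) ≥ 0 for all n and n·g(m) ≤ m·g(n) whenever 1 ≤ m ≤ n. Let ρ, d, k be natural numbers with ρ ≤ d and k ≥ 1, and let a_ρ, a_{ρ+1}, …, a_d be natural numbers with a_i ≤ k for every i ∈ {ρ, …, d}. Then ∑_{i=ρ}^{d} a_i · g(2^i) ≤ (2 − 2^{−(d−ρ)}) · k · g(2^d). -/

import Mathlib

/-- Quantitative LCCV runtime bound: for a nonnegative superlinear runtime
function `g`, anchor exponents `ρ, …, d` and at most `k` evaluations per anchor,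
`∑_{i=ρ}^{d} a_i · g(2^i) ≤ (2 − 2^{−(d−ρ)}) · k · g(2^d)`. -/
theorem lccv_runtime_le_refined_bound
    (g : ℕ → ℝ)
    (hg_nonneg : ∀ n, 0 ≤ g n)
    (hg_super : ∀ m n : ℕ, 1 ≤ m → m ≤ n → (n : ℝ) * g m ≤ (m : ℝ) * g n)
    (ρ d k : ℕ) (hρd : ρ ≤ d) (hk : 1 ≤ k)
    (a : ℕ → ℕ) (ha : ∀ i, ρ ≤ i → i ≤ d → a i ≤ k) :
    ∑ i ∈ Finset.Icc ρ d, (a i : ℝ) * g (2 ^ i)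
      ≤ (2 - (2 : ℝ) ^ (-((d : ℤ) - (ρ : ℤ)))) * (k : ℝ) * g (2 ^ d) := by
  have h2d : (0:ℝ) < (2:ℝ) ^ d := by positivity
  have key : ∀ i ∈ Finset.Icc ρ d,
      (a i : ℝ) * g (2 ^ i) ≤ (k : ℝ) * g (2 ^ d) * ((2:ℝ) ^ i / 2 ^ d) := by
    intro i hi
    simp only [Finset.mem_Icc] at hi
    have hpow : ((2:ℕ) ^ i : ℕ) ≤ 2 ^ d := Nat.pow_le_pow_right (by norm_num) hi.2
    have hsup := hg_super (2 ^ i) (2 ^ d) (Nat.one_le_two_pow) hpow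
    push_cast at hsup
    have hgi : g (2 ^ i) ≤ g (2 ^ d) * ((2:ℝ) ^ i / 2 ^ d) := by
      rw [← mul_div_assoc, le_div_iff₀ h2d]
      nlinarith
    have hai : (a i : ℝ) ≤ (k : ℝ) := by exact_mod_cast ha i hi.1 hi.2
    calc (a i : ℝ) * g (2 ^ i) ≤ (k : ℝ) * (g (2 ^ d) * ((2:ℝ) ^ i / 2 ^ d)) := by
          apply mul_le_mul hai hgi (hg_nonneg _)
          positivity
      _ = (k : ℝ) * g (2 ^ d) * ((2:ℝ) ^ i / 2 ^ d) := by ring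
  have hsum := Finset.sum_le_sum key
  refine hsum.trans ?_
  rw [← Finset.mul_sum, ← Finset.sum_div]
  have hgeom : ∑ i ∈ Finset.Icc ρ d, (2:ℝ) ^ i = (2:ℝ) ^ (d + 1) - 2 ^ ρ := by
    have : Finset.Icc ρ d = Finset.Ico ρ (d + 1) := by
      rw [Finset.Ico_add_one_right_eq_Icc]
    rw [this, geom_sum_Ico (by norm_num : (2:ℝ) ≠ 1) (by omega)]
    norm_num
  rw [hgeom]
  have hz : (2:ℝ) ^ (-((d : ℤ) - (ρ : ℤ))) = (2:ℝ) ^ ρ / 2 ^ d := by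
    rw [show -((d : ℤ) - (ρ : ℤ)) = (ρ : ℤ) - d by ring,
      zpow_sub₀ (by norm_num : (2:ℝ) ≠ 0), zpow_natCast, zpow_natCast]
  rw [hz]
  have : ((2:ℝ) ^ (d + 1) - 2 ^ ρ) / 2 ^ d = 2 - (2:ℝ) ^ ρ / 2 ^ d := by
    field_simp
    ring
  rw [this]
  ring_nf
  rfl
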